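/- Let F be a field of characteristic 0, let Γ be a finitely generated subgroup of GL_n(F), and let f be a polynomial function on GL_n(F) (a polynomial in the n² matrix entries and the inverse of the determinant) such that f(γ₀) ≠ 0 for some γ₀ ∈ Γ. Then there exists N ≥ 1, depending only on Γ and f, such that for every finite generating set S of Γ there exists γ ∈ B_S(N) with f(γ) ≠ 0. -/

import Mathlib

/-- The ball of radius `n` in the word metric on a group with respect to a finite set `S`:
the set of elements expressible as a product of at most `n` elements of `S ∪ S⁻¹`. -/
def wordBall {G : Type*} [Group G] (S : Finset G) (n : ℕ) : Set G :=
  {x | ∃ l : List G, l.length ≤ n ∧ (∀ y ∈ l, y ∈ S ∨ y⁻¹ ∈ S) ∧ l.prod = x}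

/-- `S` is a (finite) generating set of the group `G`. -/
def Generates {G : Type*} [Group G] (S : Finset G) : Prop :=
  Subgroup.closure (S : Set G) = ⊤

/-- Evaluation of a polynomial in the `n²` matrix entries and the inverse of the determinant
(a polynomial function on `GL_n`) at an element of `GL_n(F)`. -/
noncomputable def evalGL {n : ℕ} {F : Type*} [Field F]
    (p : MvPolynomial ((Fin n × Fin n) ⊕ Unit) F)
    (M : Matrix.GeneralLinearGroup (Fin n) F) : F :=
  MvPolynomial.eval
    (Sum.elim (fun ij : Fin n × Fin n => (M : Matrix (Fin n) (Fin n) F) ij.1 ij.2)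
      (fun _ => ((M : Matrix (Fin n) (Fin n) F).det)⁻¹)) p

section Aux

open MvPolynomial

/-- Substituting polynomials of total degree at most 1 does not increase total degree. -/
lemma totalDegree_bind₁_le_aux {σ τ F : Type*} [CommSemiring F]
    (g : σ → MvPolynomial τ F) (hg : ∀ i, (g i).totalDegree ≤ 1)
    (p : MvPolynomial σ F) :
    (bind₁ g p).totalDegree ≤ p.totalDegree := by
  conv_lhs => rw [p.as_sum]
  rw [map_sum]
  apply (totalDegree_finset_sum _ _).trans
  apply Finset.sup_le
  intro m hm
  rw [bind₁_monomial]
  calc (C (coeff m p) * ∏ i ∈ m.support, g i ^ m i).totalDegree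
      ≤ (C (coeff m p) : MvPolynomial τ F).totalDegree
        + (∏ i ∈ m.support, g i ^ m i).totalDegree := totalDegree_mul _ _
    _ ≤ 0 + ∑ i ∈ m.support, (g i ^ m i).totalDegree := by
        gcongr
        · exact le_of_eq (totalDegree_C _)
        · exact totalDegree_finset_prod _ _
    _ ≤ ∑ i ∈ m.support, m i * 1 := by
        rw [zero_add]
        apply Finset.sum_le_sum
        intro i _
        exact (totalDegree_pow _ _).trans (by gcongr; exact hg i)
    _ ≤ p.totalDegree := by
        simp only [mul_one]
        exact le_totalDegree hm

lemma eval_bind₁_aux {σ τ R : Type*} [CommSemiring R] (f : τ → R)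
    (g : σ → MvPolynomial τ R) (φ : MvPolynomial σ R) :
    MvPolynomial.eval f (MvPolynomial.bind₁ g φ)
      = MvPolynomial.eval (fun i => MvPolynomial.eval f (g i)) φ :=
  MvPolynomial.eval₂Hom_bind₁ _ _ _ _

/-- Right translation as a linear map on `F`-valued functions on a group. -/
def rtransl (F : Type*) [Field F] {G : Type*} [Group G] (g : G) : (G → F) →ₗ[F] (G → F) where
  toFun w := fun x => w (x * g)
  map_add' _ _ := rfl
  map_smul' _ _ := rfl

/-- Abstract escape lemma: if all right translates of `f : G → F` lie in a fixed
finite-dimensional space of functions, and `f` does not vanish identically, then balls of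
radius `finrank` (for any generating set) contain a point where `f` does not vanish. -/
theorem abstract_escape {F : Type*} [Field F] {G : Type*} [Group G]
    (f : G → F) (U : Submodule F (G → F)) [FiniteDimensional F U]
    (hU : ∀ g : G, (fun x => f (x * g)) ∈ U)
    (γ₀ : G) (h0 : f γ₀ ≠ 0) :
    ∃ N : ℕ, 1 ≤ N ∧ ∀ S : Finset G, Generates S →
      ∃ γ ∈ wordBall S N, f γ ≠ 0 := by
  classical
  set N := Module.finrank F U with hN
  have hfU : f ∈ U := by
    have := hU 1
    simpa only [mul_one] using this
  have hN1 : 1 ≤ N := by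
    have : Nontrivial U := ⟨⟨f, hfU⟩, 0, by
      intro h
      apply h0
      have := congrArg (fun v : U => (v : G → F) γ₀) h
      simpa using this⟩
    exact Module.finrank_pos
  refine ⟨N, hN1, ?_⟩
  intro S hS
  by_contra hcon
  push_neg at hcon
  -- translates
  set τ : G → (G → F) := fun g x => f (x * g) with hτ
  set W : ℕ → Submodule F (G → F) := fun k => Submodule.span F (τ '' wordBall S k) with hW
  have hball_mono : ∀ {k m : ℕ}, k ≤ m → wordBall S k ⊆ wordBall S m := by
    intro k m hkm x hx
    obtain ⟨l, hl, hly, hlp⟩ := hx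
    exact ⟨l, hl.trans hkm, hly, hlp⟩
  have hone_mem : ∀ k, (1 : G) ∈ wordBall S k := by
    intro k
    exact ⟨[], by simp, by simp, by simp⟩
  have hWmono : ∀ {k m : ℕ}, k ≤ m → W k ≤ W m := by
    intro k m hkm
    exact Submodule.span_mono (Set.image_mono (hball_mono hkm))
  have hWU : ∀ k, W k ≤ U := by
    intro k
    rw [Submodule.span_le]
    rintro w ⟨g, -, rfl⟩
    exact hU g
  have hWfd : ∀ k, FiniteDimensional F (W k) :=
    fun k => Submodule.finiteDimensional_of_le (hWU k)
  have hfW : ∀ k, f ∈ W k := by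
    intro k
    apply Submodule.subset_span
    refine ⟨1, hone_mem k, ?_⟩
    funext x; simp [hτ]
  -- the chain stabilizes before N
  have hstab : ∃ k, k < N ∧ W k = W (k + 1) := by
    by_contra hc
    push_neg at hc
    have key : ∀ k, k ≤ N → k + 1 ≤ Module.finrank F (W k) := by
      intro k
      induction k with
      | zero =>
        intro _
        have : Nontrivial (W 0) := ⟨⟨f, hfW 0⟩, 0, by
          intro h
          apply h0
          have := congrArg (fun v : W 0 => (v : G → F) γ₀) h
          simpa using this⟩
        have := hWfd 0
        exact Module.finrank_pos
      | succ k ih =>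
        intro hk
        have hkN : k < N := Nat.lt_of_succ_le hk
        have h1 : W k < W (k + 1) := lt_of_le_of_ne (hWmono (Nat.le_succ k)) (hc k hkN)
        have := hWfd (k + 1)
        have h2 := Submodule.finrank_lt_finrank_of_lt h1
        have h3 := ih (le_of_lt hkN)
        omega
    have h1 := key N le_rfl
    have := hWfd N
    have h2 : Module.finrank F (W N) ≤ N := hN ▸ Submodule.finrank_mono (hWU N)
    omega
  obtain ⟨k, hkN, hWk⟩ := hstab
  -- translation by admissible elements preserves W k
  have hinv : ∀ y : G, (y ∈ S ∨ y⁻¹ ∈ S) → ∀ w ∈ W k, rtransl F y w ∈ W k := by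
    intro y hy w hw
    rw [hWk]
    have : Submodule.map (rtransl F y) (W k) ≤ W (k + 1) := by
      rw [hW, Submodule.map_span, Submodule.span_le]
      rintro u ⟨v, ⟨g, hg, rfl⟩, rfl⟩
      apply Submodule.subset_span
      refine ⟨y * g, ?_, ?_⟩
      · obtain ⟨l, hl, hly, hlp⟩ := hg
        exact ⟨y :: l, by simpa using Nat.succ_le_succ hl,
          by intro z hz; rcases List.mem_cons.mp hz with h | h
             · exact h ▸ hy
             · exact hly z h, by simp [hlp]⟩
      · funext x
        simp [rtransl, hτ, mul_assoc]
    exact this (Submodule.mem_map_of_mem hw)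
  -- the full group preserves W k
  have hstabG : ∀ g : G, ∀ w ∈ W k, rtransl F g w ∈ W k := by
    set H : Subgroup G :=
      { carrier := {g | (∀ w ∈ W k, rtransl F g w ∈ W k) ∧ ∀ w ∈ W k, rtransl F g⁻¹ w ∈ W k}
        one_mem' := by
          constructor <;>
          · intro w hw
            have : rtransl F (1 : G)⁻¹ w = w := by funext x; simp [rtransl]
            have h1 : rtransl F (1 : G) w = w := by funext x; simp [rtransl]
            simp only [inv_one] at *
            rwa [h1]
        mul_mem' := by
          rintro a b ⟨ha1, ha2⟩ ⟨hb1, hb2⟩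
          constructor
          · intro w hw
            have : rtransl F (a * b) w = rtransl F a (rtransl F b w) := by
              funext x; simp [rtransl, mul_assoc]
            rw [this]
            exact ha1 _ (hb1 _ hw)
          · intro w hw
            have : rtransl F (a * b)⁻¹ w = rtransl F b⁻¹ (rtransl F a⁻¹ w) := by
              funext x; simp [rtransl, mul_assoc]
            rw [this]
            exact hb2 _ (ha2 _ hw)
        inv_mem' := by
          rintro a ⟨ha1, ha2⟩
          exact ⟨ha2, by simpa using ha1⟩ } with hH
    have hSH : (S : Set G) ⊆ H := by
      intro s hs
      exact ⟨hinv s (Or.inl hs), hinv s⁻¹ (Or.inr (by simpa using hs))⟩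
    have : H = ⊤ := top_le_iff.mp (hS ▸ Subgroup.closure_le H |>.mpr hSH)
    intro g
    have hg : g ∈ H := this ▸ Subgroup.mem_top g
    exact hg.1
  -- conclude
  have hτγ₀ : τ γ₀ ∈ W N := by
    have h1 : τ γ₀ = rtransl F γ₀ f := by funext x; simp [rtransl, hτ]
    exact hWmono (le_of_lt hkN) (h1 ▸ hstabG γ₀ f (hfW k))
  have hker : W N ≤ LinearMap.ker (LinearMap.proj (φ := fun _ : G => F) 1) := by
    rw [Submodule.span_le]
    rintro w ⟨g, hg, rfl⟩
    simp only [SetLike.mem_coe, LinearMap.mem_ker, LinearMap.proj_apply]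
    simpa [hτ] using hcon g hg
  have := hker hτγ₀
  simp only [LinearMap.mem_ker, LinearMap.proj_apply] at this
  rw [hτ] at this
  simp only [one_mul] at this
  exact h0 this

end Aux

/-- If a polynomial function on `GL_n(F)` does not vanish identically on a finitely generated
subgroup `Γ`, then there is an `N ≥ 1`, depending only on `Γ` and the polynomial, such that for
every finite generating set `S` of `Γ` the ball of radius `N` contains a point where the
polynomial does not vanish. -/
theorem exists_uniform_radius_escaping_subvariety
    {n : ℕ} {F : Type*} [Field F] [CharZero F]
    (Γ : Subgroup (Matrix.GeneralLinearGroup (Fin n) F)) (hfg : Group.FG Γ)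
    (p : MvPolynomial ((Fin n × Fin n) ⊕ Unit) F)
    (γ₀ : Γ) (hγ₀ : evalGL p (γ₀ : Matrix.GeneralLinearGroup (Fin n) F) ≠ 0) :
    ∃ N : ℕ, 1 ≤ N ∧ ∀ S : Finset Γ, Generates S →
      ∃ γ ∈ wordBall S N, evalGL p (γ : Matrix.GeneralLinearGroup (Fin n) F) ≠ 0 := by
  classical
  set f : Γ → F := fun γ => evalGL p (γ : Matrix.GeneralLinearGroup (Fin n) F) with hf
  -- evaluation as a linear map
  set L : MvPolynomial ((Fin n × Fin n) ⊕ Unit) F →ₗ[F] (Γ → F) :=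
    { toFun := fun q γ => evalGL q (γ : Matrix.GeneralLinearGroup (Fin n) F)
      map_add' := by intro q r; funext γ; simp [evalGL]
      map_smul' := by
        intro c q; funext γ
        simp [evalGL, MvPolynomial.smul_eq_C_mul] } with hL
  set U : Submodule F (Γ → F) :=
    Submodule.map L (MvPolynomial.restrictTotalDegree _ F p.totalDegree) with hUdef
  have : FiniteDimensional F U := by
    have : Module.Finite F (MvPolynomial.restrictTotalDegree ((Fin n × Fin n) ⊕ Unit) F
        p.totalDegree) := inferInstance
    exact Module.Finite.map _ L
  have hU : ∀ g : Γ, (fun x => f (x * g)) ∈ U := by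
    intro g
    -- the substitution corresponding to right multiplication by g
    set sub : ((Fin n × Fin n) ⊕ Unit) → MvPolynomial ((Fin n × Fin n) ⊕ Unit) F :=
      Sum.elim
        (fun ij => ∑ k, MvPolynomial.C
            (((g : Matrix.GeneralLinearGroup (Fin n) F) : Matrix (Fin n) (Fin n) F) k ij.2)
          * MvPolynomial.X (Sum.inl (ij.1, k)))
        (fun _ => MvPolynomial.C
            ((((g : Matrix.GeneralLinearGroup (Fin n) F) : Matrix (Fin n) (Fin n) F).det)⁻¹)
          * MvPolynomial.X (Sum.inr ())) with hsub
    have hsubdeg : ∀ i, (sub i).totalDegree ≤ 1 := by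
      rintro (⟨i, j⟩ | u)
      · apply (MvPolynomial.totalDegree_finset_sum _ _).trans
        apply Finset.sup_le
        intro k _
        apply (MvPolynomial.totalDegree_mul _ _).trans
        simp [MvPolynomial.totalDegree_C, MvPolynomial.totalDegree_X]
      · apply (MvPolynomial.totalDegree_mul _ _).trans
        simp [MvPolynomial.totalDegree_C, MvPolynomial.totalDegree_X]
    refine ⟨MvPolynomial.bind₁ sub p, ?_, ?_⟩
    · simp only [SetLike.mem_coe]
      rw [MvPolynomial.mem_restrictTotalDegree]
      exact totalDegree_bind₁_le_aux sub hsubdeg p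
    · funext γ
      set v : Γ → ((Fin n × Fin n) ⊕ Unit) → F := fun δ =>
        Sum.elim
          (fun ij : Fin n × Fin n =>
            ((δ : Matrix.GeneralLinearGroup (Fin n) F) : Matrix (Fin n) (Fin n) F) ij.1 ij.2)
          (fun _ =>
            (((δ : Matrix.GeneralLinearGroup (Fin n) F) : Matrix (Fin n) (Fin n) F).det)⁻¹)
        with hv
      show evalGL (MvPolynomial.bind₁ sub p) (γ : Matrix.GeneralLinearGroup (Fin n) F)
        = f (γ * g)
      have h1 : evalGL (MvPolynomial.bind₁ sub p) (γ : Matrix.GeneralLinearGroup (Fin n) F)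
          = MvPolynomial.eval (fun i => MvPolynomial.eval (v γ) (sub i)) p :=
        eval_bind₁_aux _ _ _
      have h2 : f (γ * g) = MvPolynomial.eval (v (γ * g)) p := rfl
      rw [h1, h2]
      have hveq : (fun i => MvPolynomial.eval (v γ) (sub i)) = v (γ * g) := by
        funext i
        rcases i with ⟨i, j⟩ | u
        · simp only [hsub, hv, Sum.elim_inl, map_sum, MvPolynomial.eval_mul,
            MvPolynomial.eval_C, MvPolynomial.eval_X]
          simp only [Subgroup.coe_mul, Units.val_mul, Matrix.mul_apply]
          exact Finset.sum_congr rfl (fun k _ => mul_comm _ _)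
        · simp only [hsub, hv, Sum.elim_inr, MvPolynomial.eval_mul, MvPolynomial.eval_C,
            MvPolynomial.eval_X]
          simp only [Subgroup.coe_mul, Units.val_mul, Matrix.det_mul, mul_inv]
          ring
      rw [hveq]
  obtain ⟨N, hN1, hN⟩ := abstract_escape f U hU γ₀ hγ₀
  exact ⟨N, hN1, hN⟩
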